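/- Let n ≥ 3 and k ≥ 1, and let (x, c, u) be a combinatorial degenerated magic polygon D(n,k). Then the magic sum and the root label satisfy the relation u = (k+1)·c. -/

import Mathlib

/-- The labeling function of a combinatorial degenerated magic polygon `D(n,k)`:
the labels `x t p` of the points on the `k` polygons (root vertex excluded)
together with the root label `c`. -/
def degMagicLabels (n k : ℕ) (x : Fin k → Fin (k * (n - 2) + 1) → ℕ) (c : ℕ) :
    (Fin k × Fin (k * (n - 2) + 1)) ⊕ Unit → ℕ :=
  Sum.elim (fun q => x q.1 q.2) (fun _ => c)

/-- `(x, c, u)` is a combinatorial degenerated magic polygon `D(n,k)`: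
(1) the `k²(n−2)+k+1` labels are exactly `1, …, k²(n−2)+k+1`, each occurring once;
(2) every edge sum `∑_{j=0}^{k} x t (i·k + j)`, for an edge not adjacent to the
root (`0 ≤ i ≤ n−3`), equals `u`;
(3) for every position `p`, the sum `(∑ t, x t p) + c` along the segment joining
the root vertex to the boundary of the largest polygon equals `u`. -/
def IsDegMagicPolygon (n k : ℕ) (x : Fin k → Fin (k * (n - 2) + 1) → ℕ) (c u : ℕ) : Prop :=
  Function.Injective (degMagicLabels n k x c) ∧
  Set.range (degMagicLabels n k x c) = Set.Icc 1 (k ^ 2 * (n - 2) + k + 1) ∧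
  (∀ t : Fin k, ∀ i ∈ Finset.range (n - 2),
    ∑ j ∈ Finset.range (k + 1), x t (Fin.ofNat _ (i * k + j : ℕ)) = u) ∧
  (∀ p : Fin (k * (n - 2) + 1), (∑ t : Fin k, x t p) + c = u)

theorem degMagicPolygon_sum_eq_root (n k : ℕ) (hn : 3 ≤ n) (hk : 1 ≤ k)
    (x : Fin k → Fin (k * (n - 2) + 1) → ℕ) (c u : ℕ)
    (h : IsDegMagicPolygon n k x c u) :
    u = (k + 1) * c := by
  obtain ⟨-, -, h2, h3⟩ := h
  have hm : 0 ∈ Finset.range (n - 2) := Finset.mem_range.mpr (by omega)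
  have e1 : ∑ t : Fin k, ∑ j ∈ Finset.range (k + 1), x t (Fin.ofNat _ (0 * k + j : ℕ)) = k * u := by
    simp only [fun t => h2 t 0 hm]
    simp [Finset.card_univ, mul_comm]
  have e2 : ∑ j ∈ Finset.range (k + 1),
      ((∑ t : Fin k, x t (Fin.ofNat _ (0 * k + j : ℕ))) + c) = (k + 1) * u := by
    simp only [fun j => h3 (Fin.ofNat _ (0 * k + j : ℕ) : Fin (k * (n - 2) + 1))]
    simp [mul_comm]
  rw [Finset.sum_add_distrib, Finset.sum_const, Finset.card_range, smul_eq_mul,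
    Finset.sum_comm, e1] at e2
  have : (k + 1) * u = k * u + u := by ring
  omega
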